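/- There exists an infinite sequence (b_k)_{k≥1} of positive reals with b_2 = 1, satisfying b_{k+1} = 1 + b_{k-1}^2 / b_k for all k ≥ 2, and such that b_k ≤ k for all k ≥ 1. -/

import Mathlib

noncomputable def pp (a : ℝ) : ℕ → ℝ × ℝ
  | 0 => (a, 1)
  | n+1 => ((pp a n).2, 1 + (pp a n).1 ^ 2 / (pp a n).2)

noncomputable def g (a : ℝ) (k : ℕ) : ℝ := if k = 0 then 1 else (pp a (k-1)).1

lemma pp_snd_ge_one (a : ℝ) : ∀ n, 1 ≤ (pp a n).2 := by
  intro n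
  induction n with
  | zero => simp [pp]
  | succ n ih =>
    simp only [pp]
    have h2 : 0 < (pp a n).2 := lt_of_lt_of_le one_pos ih
    have : 0 ≤ (pp a n).1 ^ 2 / (pp a n).2 := div_nonneg (sq_nonneg _) h2.le
    linarith

lemma g_one (a : ℝ) : g a 1 = a := by simp [g, pp]

lemma g_two (a : ℝ) : g a 2 = 1 := by simp [g, pp]

lemma g_ge_one (a : ℝ) (m : ℕ) : 1 ≤ g a (m+2) := by
  show 1 ≤ (pp a (m+1)).1
  simp only [pp]
  exact pp_snd_ge_one a m

lemma g_rec (a : ℝ) (m : ℕ) : g a (m+3) = 1 + (g a (m+1))^2 / (g a (m+2)) := by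
  show (pp a (m+2)).1 = 1 + (pp a m).1 ^ 2 / (pp a (m+1)).1
  simp [pp]

lemma pp_cont (n : ℕ) : Continuous (fun a => pp a n) := by
  induction n with
  | zero => exact continuous_id.prodMk continuous_const
  | succ n ih =>
    have h1 : Continuous fun a => (pp a n).1 := (continuous_fst).comp ih
    have h2 : Continuous fun a => (pp a n).2 := (continuous_snd).comp ih
    have hne : ∀ a, (pp a n).2 ≠ 0 := fun a =>
      ne_of_gt (lt_of_lt_of_le one_pos (pp_snd_ge_one a n))
    exact (h2).prodMk (continuous_const.add (((h1.pow 2).div h2 hne)))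

lemma g_cont (k : ℕ) : Continuous (fun a => g a k) := by
  rcases k with _ | m
  · simpa [g] using continuous_const
  · simpa [g] using (pp_cont m).fst
noncomputable def rr (s : ℝ) : ℕ → ℝ
  | 0 => s
  | 1 => s
  | (j+2) => Real.sqrt (rr s (j+1) * (rr s j - 1))

lemma rr_cont (j : ℕ) : Continuous (fun s => rr s j) ∧ Continuous (fun s => rr s (j+1)) := by
  induction j with
  | zero => exact ⟨by simpa [rr] using continuous_id', by simpa [rr] using continuous_id'⟩
  | succ j ih =>
    refine ⟨ih.2, ?_⟩
    show Continuous fun s => rr s (j+2)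
    simp only [rr]
    exact Real.continuous_sqrt.comp (ih.2.mul (ih.1.sub continuous_const))

lemma rr_inv (s : ℝ) (hs : 0 ≤ s) :
    ∀ j, 0 ≤ rr s (j+1) ∧ rr s (j+1) ≤ rr s j ∧ rr s j ≤ rr s (j+1) + 1 := by
  intro j
  induction j with
  | zero => exact ⟨hs, le_refl _, by simp [rr]⟩
  | succ j ih =>
    obtain ⟨h0, h1, h2⟩ := ih
    set x := rr s j with hx
    set y := rr s (j+1) with hy
    have hz : rr s (j+2) = Real.sqrt (y * (x - 1)) := by rw [rr]
    refine ⟨by rw [hz]; exact Real.sqrt_nonneg _, ?_, ?_⟩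
    · rw [hz]
      have hle : y * (x - 1) ≤ y * y := by nlinarith
      calc Real.sqrt (y * (x-1)) ≤ Real.sqrt (y * y) := Real.sqrt_le_sqrt hle
        _ = y := Real.sqrt_mul_self h0
    · rw [hz]
      by_cases hy1 : y ≤ 1
      · have := Real.sqrt_nonneg (y * (x-1)); linarith
      · push_neg at hy1
        have h3 : (y - 1)^2 ≤ y * (x - 1) := by nlinarith
        have h4 : Real.sqrt ((y-1)^2) ≤ Real.sqrt (y * (x-1)) := Real.sqrt_le_sqrt h3
        rw [Real.sqrt_sq (by linarith)] at h4
        linarith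

lemma rr_one : ∀ j, rr 1 (j+2) = 0 := by
  intro j
  induction j with
  | zero => show Real.sqrt (rr 1 1 * (rr 1 0 - 1)) = 0; simp [rr]
  | succ j ih =>
    show Real.sqrt (rr 1 (j+2) * (rr 1 (j+1) - 1)) = 0
    rw [ih]; simp

lemma rr_lb (s : ℝ) (hs : 0 ≤ s) : ∀ j, s - j ≤ rr s j := by
  intro j
  induction j with
  | zero => simp [rr]
  | succ j ih =>
    have h := (rr_inv s hs j).2.2
    push_cast
    linarith


lemma exists_mono (n : ℕ) : ∃ a ∈ Set.Icc (0:ℝ) 1, ∀ k, 1 ≤ k → k ≤ n → g a k ≤ g a (k+1) := by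
  have hcont : Continuous fun s => rr s (n+2) := (rr_cont (n+2)).1
  have hz : rr 1 (n+2) = 0 := rr_one n
  have hn0 : (0:ℝ) ≤ (n:ℝ) := Nat.cast_nonneg n
  have hS : (1:ℝ) ≤ (n:ℝ)+5 := by linarith
  have hbig : (1:ℝ) ≤ rr ((n:ℝ)+5) (n+2) := by
    have := rr_lb ((n:ℝ)+5) (by linarith) (n+2)
    push_cast at this
    linarith
  have hmem : (1:ℝ) ∈ Set.Icc (rr 1 (n+2)) (rr ((n:ℝ)+5) (n+2)) := ⟨by rw [hz]; norm_num, hbig⟩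
  obtain ⟨s, hsmem, hs1⟩ := intermediate_value_Icc hS hcont.continuousOn hmem
  change rr s (n+2) = 1 at hs1
  have hs0 : (0:ℝ) ≤ s := le_trans zero_le_one hsmem.1
  have hmono : ∀ j, rr s (j+1) ≤ rr s j := fun j => (rr_inv s hs0 j).2.1
  have hnn : ∀ j, 0 ≤ rr s j := by
    intro j
    cases j with
    | zero => exact hs0
    | succ j => exact (rr_inv s hs0 j).1
  have hanti : Antitone (rr s) := antitone_nat_of_succ_le hmono
  have hone : ∀ j, j ≤ n+2 → 1 ≤ rr s j := by
    intro j hj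
    rw [← hs1]
    exact hanti hj
  set a := rr s (n+3) with ha
  have key : ∀ m, m ≤ n+1 → g a (m+1) = rr s (n+3-m) ∧ g a (m+2) = rr s (n+2-m) := by
    intro m
    induction m with
    | zero =>
      intro _
      constructor
      · rw [g_one, Nat.sub_zero]
      · rw [g_two, Nat.sub_zero, hs1]
    | succ m ih =>
      intro hm
      obtain ⟨t, ht⟩ : ∃ t, n = m + t := ⟨n - m, by omega⟩
      obtain ⟨ih1, ih2⟩ := ih (by omega)
      have e1 : n + 3 - m = t + 3 := by omega
      have e2 : n + 2 - m = t + 2 := by omega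
      have e3 : n + 3 - (m+1) = t + 2 := by omega
      have e4 : n + 2 - (m+1) = t + 1 := by omega
      rw [e1] at ih1
      rw [e2] at ih2
      rw [e3, e4]
      refine ⟨ih2, ?_⟩
      have hrec : g a (m+3) = 1 + (g a (m+1))^2 / (g a (m+2)) := g_rec a m
      rw [show m+1+2 = m+3 from rfl, hrec, ih1, ih2]
      have hsq : rr s (t+3) ^ 2 = rr s (t+2) * (rr s (t+1) - 1) := by
        have hp : 0 ≤ rr s (t+2) * (rr s (t+1) - 1) := by
          have h1 := hone (t+1) (by omega)
          have h2 := hnn (t+2)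
          nlinarith
        rw [show rr s (t+3) = Real.sqrt (rr s (t+2) * (rr s (t+1) - 1)) from by rw [rr]]
        exact Real.sq_sqrt hp
      have hpos : (0:ℝ) < rr s (t+2) := lt_of_lt_of_le one_pos (hone (t+2) (by omega))
      rw [hsq, mul_comm, mul_div_assoc, div_self (ne_of_gt hpos), mul_one]
      ring
  refine ⟨a, ⟨hnn _, ?_⟩, ?_⟩
  · rw [← hs1]
    exact hanti (by omega)
  · intro k hk1 hkn
    obtain ⟨m, rfl⟩ : ∃ m, k = m + 1 := ⟨k - 1, by omega⟩
    obtain ⟨k1, k2⟩ := key m (by omega)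
    rw [k1, show m+1+1 = m+2 from rfl, k2]
    exact hanti (by omega)

theorem stmt_10 :
    ∃ b : ℕ → ℝ, (∀ k : ℕ, 1 ≤ k → 0 < b k) ∧ b 2 = 1 ∧
      (∀ k : ℕ, 2 ≤ k → b (k + 1) = 1 + (b (k - 1)) ^ 2 / b k) ∧
      (∀ k : ℕ, 1 ≤ k → b k ≤ k) := by
  set K : ℕ → Set ℝ := fun n =>
    Set.Icc (0:ℝ) 1 ∩ ⋂ (k : ℕ), {a : ℝ | 1 ≤ k → k ≤ n → g a k ≤ g a (k+1)} with hK
  have hclosed : ∀ n, IsClosed (K n) := by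
    intro n
    refine isClosed_Icc.inter (isClosed_iInter fun k => ?_)
    by_cases h : 1 ≤ k ∧ k ≤ n
    · have : {a : ℝ | 1 ≤ k → k ≤ n → g a k ≤ g a (k+1)} = {a : ℝ | g a k ≤ g a (k+1)} := by
        ext a; simp [h.1, h.2]
      rw [this]
      exact isClosed_le (g_cont k) (g_cont (k+1))
    · have : {a : ℝ | 1 ≤ k → k ≤ n → g a k ≤ g a (k+1)} = Set.univ := by
        ext a; simp only [Set.mem_setOf_eq, Set.mem_univ, iff_true]
        intro h1 h2; exact absurd ⟨h1, h2⟩ h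
      rw [this]
      exact isClosed_univ
  have hnested : ∀ n, K (n+1) ⊆ K n := by
    intro n a ha
    refine ⟨ha.1, ?_⟩
    have h2 := ha.2
    simp only [Set.mem_iInter, Set.mem_setOf_eq] at h2 ⊢
    intro k h1 hkn
    exact h2 k h1 (by omega)
  have hne : ∀ n, (K n).Nonempty := by
    intro n
    obtain ⟨a, haI, hmono⟩ := exists_mono n
    refine ⟨a, haI, ?_⟩
    simp only [Set.mem_iInter, Set.mem_setOf_eq]
    exact fun k h1 h2 => hmono k h1 h2
  have hcomp : IsCompact (K 0) :=
    isCompact_Icc.of_isClosed_subset (hclosed 0) Set.inter_subset_left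
  obtain ⟨a, ha⟩ := IsCompact.nonempty_iInter_of_sequence_nonempty_isCompact_isClosed
    K hnested hne hcomp hclosed
  simp only [Set.mem_iInter] at ha
  have haI : a ∈ Set.Icc (0:ℝ) 1 := (ha 0).1
  have hmono : ∀ k, 1 ≤ k → g a k ≤ g a (k+1) := by
    intro k hk
    have := (ha k).2
    simp only [Set.mem_iInter, Set.mem_setOf_eq] at this
    exact this k hk le_rfl
  have hane : a ≠ 0 := by
    intro h0
    have h45 := hmono 4 (by norm_num)
    rw [h0] at h45
    norm_num [g, pp] at h45
  have hapos : 0 < a := lt_of_le_of_ne haI.1 (Ne.symm hane)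
  have hpos : ∀ k, 1 ≤ k → 0 < g a k := by
    intro k hk
    rcases k with _ | _ | m
    · omega
    · rw [g_one]; exact hapos
    · exact lt_of_lt_of_le one_pos (g_ge_one a m)
  refine ⟨g a, hpos, g_two a, ?_, ?_⟩
  · intro k hk
    obtain ⟨m, rfl⟩ : ∃ m, k = m + 2 := ⟨k - 2, by omega⟩
    rw [show m+2+1 = m+3 from rfl, show m+2-1 = m+1 from rfl]
    exact g_rec a m
  · have step : ∀ m : ℕ, g a (m+1) ≤ (m:ℝ) + 1 := by
      intro m
      induction m using Nat.strong_induction_on with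
      | _ m ih =>
        match m with
        | 0 => rw [g_one]; exact le_trans haI.2 (by norm_num)
        | 1 => rw [g_two]; norm_num
        | (m+2) =>
          have ih1 := ih m (by omega)
          have hrec := g_rec a m
          have hm1 : 0 < g a (m+1) := hpos (m+1) (by omega)
          have hm2 : 0 < g a (m+2) := hpos (m+2) (by omega)
          have hmm : g a (m+1) ≤ g a (m+2) := hmono (m+1) (by omega)
          have hdiv : (g a (m+1))^2 / (g a (m+2)) ≤ g a (m+1) := by
            rw [div_le_iff₀ hm2]
            nlinarith
          rw [show m+2+1 = m+3 from rfl, hrec]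
          push_cast
          linarith
    intro k hk
    obtain ⟨m, rfl⟩ : ∃ m, k = m + 1 := ⟨k - 1, by omega⟩
    have := step m
    push_cast
    linarith
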